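/- Over the field 𝔽₂(x) of rational functions in x over 𝔽₂, let u = [[x,1],[0,x]] and v = [[1,0],[1,1]]. Then u and v are invertible and uv - vu = I (the identity 2×2 matrix), giving a representation of the extended Weyl algebra W over 𝔽₂. -/
import Mathlib


/-- Over the field `𝔽₂(x)` of rational functions over `𝔽₂`, the matrices
`u = [[x,1],[0,x]]` and `v = [[1,0],[1,1]]` are invertible and satisfy `uv - vu = 1`,
giving a representation of the extended Weyl algebra over `𝔽₂`. -/
theorem weyl_rep_char_two :
    IsUnit (!![RatFunc.X, 1; 0, RatFunc.X] : Matrix (Fin 2) (Fin 2) (RatFunc (ZMod 2))) ∧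
    IsUnit (!![1, 0; 1, 1] : Matrix (Fin 2) (Fin 2) (RatFunc (ZMod 2))) ∧
    (!![RatFunc.X, 1; 0, RatFunc.X] : Matrix (Fin 2) (Fin 2) (RatFunc (ZMod 2))) *
        !![1, 0; 1, 1] -
      !![1, 0; 1, 1] * !![RatFunc.X, 1; 0, RatFunc.X] = 1 := by
  have hX : (RatFunc.X : RatFunc (ZMod 2)) ≠ 0 := RatFunc.X_ne_zero
  refine ⟨?_, ?_, ?_⟩
  · rw [Matrix.isUnit_iff_isUnit_det, Matrix.det_fin_two_of]
    simpa using IsUnit.mul hX.isUnit hX.isUnit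
  · rw [Matrix.isUnit_iff_isUnit_det, Matrix.det_fin_two_of]
    simp
  · have h2 : (1 : RatFunc (ZMod 2)) + 1 = 0 := by
      have := congrArg (algebraMap (ZMod 2) (RatFunc (ZMod 2)))
        (show (1 : ZMod 2) + 1 = 0 by decide)
      simpa using this
    ext i j
    fin_cases i <;> fin_cases j <;>
      simp [Matrix.mul_apply, Fin.sum_univ_two, Matrix.one_apply] <;>
      first
        | rfl
        | linear_combination h2
        | linear_combination -h2
        | linear_combination RatFunc.X * h2
        | linear_combination (-RatFunc.X) * h2
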